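/- Convex-hull area lower bound: Let S be a finite set of n points of the integer lattice ℤ² in the plane, not all collinear, and let K ⊆ ℝ² be the convex hull (over ℝ) of S. Then the two-dimensional Lebesgue measure of K is at least n/2 − 1. -/

import Mathlib

open MeasureTheory

/-- The embedding of `ℤ × ℤ` into `ℝ × ℝ`. -/
def latticeEmbed (p : ℤ × ℤ) : ℝ × ℝ := ((p.1 : ℝ), (p.2 : ℝ))


lemma mem_triangle_combo {E : Type*} [AddCommGroup E] [Module ℝ E] {s : Set E} (hc : Convex ℝ s)
    {p q r : E} (hp : p ∈ s) (hq : q ∈ s) (hr : r ∈ s) {a b c : ℝ}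
    (ha : 0 ≤ a) (hb : 0 ≤ b) (hcc : 0 ≤ c) (habc : a + b + c = 1) :
    a • p + b • q + c • r ∈ s := by
  have := hc.sum_mem (t := Finset.univ) (w := ![a,b,c]) (z := ![p,q,r])
    (by intro i _; fin_cases i <;> simpa) (by simp [Fin.sum_univ_three, habc])
    (by intro i _; fin_cases i <;> simpa)
  simpa [Fin.sum_univ_three, add_assoc] using this

lemma stdTri_half :
    (1/2 : ENNReal) ≤ volume (convexHull ℝ {(0,0), (1,0), (0,1)} : Set (ℝ × ℝ)) := by
  set T : Set (ℝ × ℝ) := convexHull ℝ {(0,0), (1,0), (0,1)} with hT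
  have hsub : regionBetween (fun _ => (0:ℝ)) (fun x => 1 - x) (Set.Ioc 0 1) ⊆ T := by
    rintro ⟨x, y⟩ ⟨hx, hy⟩
    simp only [Set.mem_Ioc] at hx
    simp only [Set.mem_Ioo] at hy
    have h1 : ((0:ℝ),(0:ℝ)) ∈ T := subset_convexHull _ _ (by simp)
    have h2 : ((1:ℝ),(0:ℝ)) ∈ T := subset_convexHull _ _ (by simp)
    have h3 : ((0:ℝ),(1:ℝ)) ∈ T := subset_convexHull _ _ (by simp)
    have h4 : x • ((1:ℝ),(0:ℝ)) + y • ((0:ℝ),(1:ℝ)) + (1 - x - y) • ((0:ℝ),(0:ℝ)) ∈ T :=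
      mem_triangle_combo (convex_convexHull ℝ _) h2 h3 h1 (le_of_lt hx.1) (le_of_lt hy.1)
        (by nlinarith [hy.2]) (by ring)
    have heq : ((x, y) : ℝ × ℝ)
        = x • ((1:ℝ),(0:ℝ)) + y • ((0:ℝ),(1:ℝ)) + (1 - x - y) • ((0:ℝ),(0:ℝ)) := by
      simp [Prod.ext_iff]
    rw [heq]; exact h4
  have hreg := volume_regionBetween_eq_integral (μ := volume) (f := fun _ => (0:ℝ))
    (g := fun x => 1 - x) (s := Set.Ioc 0 1)
    integrableOn_zero
    (Continuous.integrableOn_Ioc (by continuity))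
    measurableSet_Ioc
    (by intro x hx; simp only [Set.mem_Ioc] at hx; linarith [hx.2])
  rw [← Measure.volume_eq_prod] at hreg
  simp only [Pi.sub_apply, sub_zero] at hreg
  have hval : (∫ y in Set.Ioc (0:ℝ) 1, ((1:ℝ) - y)) = 1/2 := by
    rw [← intervalIntegral.integral_of_le (by norm_num : (0:ℝ) ≤ 1)]
    have : ∫ x in (0:ℝ)..1, ((1:ℝ) - x) = (∫ x in (0:ℝ)..1, (1:ℝ)) - ∫ x in (0:ℝ)..1, x := by
      rw [← intervalIntegral.integral_sub intervalIntegrable_const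
        intervalIntegral.intervalIntegrable_id]
    rw [this]; simp; norm_num
  calc (1/2 : ENNReal) = ENNReal.ofReal (1/2) := by
        rw [ENNReal.ofReal_div_of_pos] <;> norm_num
    _ = volume (regionBetween (fun _ => (0:ℝ)) (fun x => 1 - x) (Set.Ioc 0 1)) := by
        rw [hreg, hval]
    _ ≤ volume T := measure_mono hsub

lemma latticeTri_half (v a b : ℤ × ℤ)
    (h : ¬ Collinear ℝ ({latticeEmbed v, latticeEmbed a, latticeEmbed b} : Set (ℝ × ℝ))) :
    (1/2 : ENNReal) ≤ volume (convexHull ℝ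
      ({latticeEmbed v, latticeEmbed a, latticeEmbed b} : Set (ℝ × ℝ))) := by
  set V := latticeEmbed v
  set p : ℝ × ℝ := latticeEmbed a - latticeEmbed v with hp
  set q : ℝ × ℝ := latticeEmbed b - latticeEmbed v with hq
  set d : ℤ := (a.1 - v.1) * (b.2 - v.2) - (b.1 - v.1) * (a.2 - v.2) with hd
  have hp1 : p.1 = ((a.1 - v.1 : ℤ) : ℝ) := by simp [hp, latticeEmbed]
  have hp2 : p.2 = ((a.2 - v.2 : ℤ) : ℝ) := by simp [hp, latticeEmbed]
  have hq1 : q.1 = ((b.1 - v.1 : ℤ) : ℝ) := by simp [hq, latticeEmbed]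
  have hq2 : q.2 = ((b.2 - v.2 : ℤ) : ℝ) := by simp [hq, latticeEmbed]
  have hdet : p.1 * q.2 - q.1 * p.2 = (d : ℝ) := by
    rw [hp1, hp2, hq1, hq2, hd]; push_cast; ring
  -- d ≠ 0
  have hdne : d ≠ 0 := by
    intro hd0
    apply h
    rw [collinear_iff_exists_forall_eq_smul_vadd]
    by_cases hpz : p = (0, 0)
    · refine ⟨V, q, ?_⟩
      rintro x (rfl | rfl | rfl)
      · exact ⟨0, by simp⟩
      · refine ⟨0, ?_⟩
        have : latticeEmbed a = V + p := by simp [hp, V]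
        simp [this, hpz]
      · refine ⟨1, ?_⟩
        have : latticeEmbed b = V + q := by simp [hq, V]
        simp [this, add_comm]
    · refine ⟨V, p, ?_⟩
      have hrel : p.1 * q.2 = q.1 * p.2 := by
        have := hdet; rw [hd0] at this; push_cast at this; linarith
      have hqt : ∃ t : ℝ, q = t • p := by
        by_cases h1 : p.1 = 0
        · have h2 : p.2 ≠ 0 := by
            intro h2; apply hpz; ext <;> simp [h1, h2]
          refine ⟨q.2 / p.2, ?_⟩
          have hq1' : q.1 = 0 := by
            have h0 : q.1 * p.2 = 0 := by rw [← hrel, h1]; ring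
            rcases mul_eq_zero.1 h0 with h | h
            · exact h
            · exact absurd h h2
          ext
          · simp [hq1', h1]
          · simp only [Prod.smul_snd, smul_eq_mul]; field_simp
        · refine ⟨q.1 / p.1, ?_⟩
          ext
          · simp only [Prod.smul_fst, smul_eq_mul]; field_simp
          · simp only [Prod.smul_snd, smul_eq_mul]
            rw [div_mul_eq_mul_div, eq_div_iff h1]; linarith [hrel]
      obtain ⟨t, ht⟩ := hqt
      rintro x (rfl | rfl | rfl)
      · exact ⟨0, by simp⟩
      · refine ⟨1, ?_⟩
        have : latticeEmbed a = V + p := by simp [hp, V]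
        simp [this, add_comm]
      · refine ⟨t, ?_⟩
        have : latticeEmbed b = V + q := by simp [hq, V]
        simp [this, ht, add_comm]
  -- the linear map
  set L := Matrix.toLin (Module.Basis.finTwoProd ℝ) (Module.Basis.finTwoProd ℝ) !![p.1, q.1; p.2, q.2] with hL
  have hLdet : LinearMap.det L = (d : ℝ) := by
    rw [hL, LinearMap.det_toLin, Matrix.det_fin_two_of]
    rw [← hdet]
  have hLe1 : L (1, 0) = p := by simp [hL, Prod.ext_iff]
  have hLe2 : L (0, 1) = q := by simp [hL, Prod.ext_iff]
  have hL0 : L (0, 0) = 0 := by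
    have : ((0,0) : ℝ × ℝ) = (0 : ℝ × ℝ) := rfl
    rw [this, map_zero]
  -- image of standard triangle
  have himg : (fun x => V + L x) '' (convexHull ℝ ({(0,0), (1,0), (0,1)} : Set (ℝ × ℝ)))
      = convexHull ℝ ({latticeEmbed v, latticeEmbed a, latticeEmbed b} : Set (ℝ × ℝ)) := by
    have hf : (fun x => V + L x) = ⇑(LinearMap.toAffineMap L + AffineMap.const ℝ (ℝ × ℝ) V) := by
      funext x; simp [add_comm]
    rw [hf, AffineMap.image_convexHull]
    congr 1
    rw [Set.image_insert_eq, Set.image_insert_eq, Set.image_singleton]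
    simp only [AffineMap.coe_add, Pi.add_apply, LinearMap.coe_toAffineMap, AffineMap.const_apply]
    rw [hL0, hLe1, hLe2]
    have e1 : (0 : ℝ × ℝ) + V = latticeEmbed v := by simp [V]
    have e2 : p + V = latticeEmbed a := by simp [hp, V]
    have e3 : q + V = latticeEmbed b := by simp [hq, V]
    rw [e1, e2, e3]
  -- volume computation
  have hvol : volume ((fun x => V + L x) '' (convexHull ℝ ({(0,0), (1,0), (0,1)} : Set (ℝ × ℝ))))
      = ENNReal.ofReal |(d : ℝ)| * volume (convexHull ℝ ({(0,0), (1,0), (0,1)} : Set (ℝ × ℝ))) := by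
    have hcomp : (fun x => V + L x) '' (convexHull ℝ ({(0,0), (1,0), (0,1)} : Set (ℝ × ℝ)))
        = (fun y => -V + y) ⁻¹' (L '' (convexHull ℝ ({(0,0), (1,0), (0,1)} : Set (ℝ × ℝ)))) := by
      ext y
      constructor
      · rintro ⟨x, hx, rfl⟩
        refine ⟨x, hx, ?_⟩
        show L x = -V + (V + L x)
        rw [neg_add_cancel_left]
      · rintro ⟨x, hx, hxy⟩
        refine ⟨x, hx, ?_⟩
        show V + L x = y
        have hxy' : L x = -V + y := hxy
        rw [hxy', add_neg_cancel_left]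
    rw [hcomp, measure_preimage_add, Measure.addHaar_image_linearMap, hLdet]
  have habs : (1 : ℝ) ≤ |(d : ℝ)| := by
    rw [← Int.cast_abs]
    exact_mod_cast Int.one_le_abs hdne
  calc (1/2 : ENNReal) = 1 * (1/2 : ENNReal) := (one_mul _).symm
    _ ≤ ENNReal.ofReal |(d : ℝ)| * volume (convexHull ℝ ({(0,0), (1,0), (0,1)} : Set (ℝ × ℝ))) := by
        apply mul_le_mul'
        · rw [show (1 : ENNReal) = ENNReal.ofReal 1 by simp]
          exact ENNReal.ofReal_le_ofReal habs
        · exact stdTri_half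
    _ = volume (convexHull ℝ ({latticeEmbed v, latticeEmbed a, latticeEmbed b} : Set (ℝ × ℝ))) := by
        rw [← hvol, himg]


lemma latticeEmbed_inj : Function.Injective latticeEmbed := by
  rintro ⟨a1, a2⟩ ⟨b1, b2⟩ h
  simp only [latticeEmbed, Prod.ext_iff] at h ⊢
  exact_mod_cast h

-- level sets of nonzero functionals are collinear
lemma collinear_level (α β c : ℝ) (h : ¬(α = 0 ∧ β = 0)) :
    Collinear ℝ {x : ℝ × ℝ | α * x.1 + β * x.2 = c} := by
  rw [collinear_iff_exists_forall_eq_smul_vadd]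
  by_cases hα : α = 0
  · have hβ : β ≠ 0 := fun hβ => h ⟨hα, hβ⟩
    refine ⟨(0, c / β), (-β, α), ?_⟩
    rintro ⟨x1, x2⟩ hx
    simp only [Set.mem_setOf_eq, hα, zero_mul, zero_add] at hx
    refine ⟨-x1 / β, ?_⟩
    have : x2 = c / β := by field_simp at hx ⊢; linarith
    simp [Prod.ext_iff, this, hα]
    field_simp
  · refine ⟨(c / α, 0), (-β, α), ?_⟩
    rintro ⟨x1, x2⟩ hx
    simp only [Set.mem_setOf_eq] at hx
    refine ⟨x2 / α, ?_⟩
    have hx1 : x1 = (c - β * x2) / α := by rw [eq_div_iff hα]; linarith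
    simp [Prod.ext_iff, hx1]
    constructor
    · field_simp; ring
    · field_simp
lemma level_null (g : (ℝ × ℝ) →ₗ[ℝ] ℝ) (x₀ : ℝ × ℝ) (hx₀ : g x₀ ≠ 0) (c : ℝ) :
    volume {x : ℝ × ℝ | g x = c} = 0 := by
  set xc : ℝ × ℝ := (c / g x₀) • x₀ with hxc
  have hgxc : g xc = c := by
    rw [hxc, g.map_smul, smul_eq_mul, div_mul_cancel₀ _ hx₀]
  have hset : {x : ℝ × ℝ | g x = c} = (fun y => -xc + y) ⁻¹' (LinearMap.ker g : Set (ℝ × ℝ)) := by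
    ext y
    simp only [Set.mem_setOf_eq, Set.mem_preimage, SetLike.mem_coe, LinearMap.mem_ker,
      map_add, map_neg, hgxc]
    constructor
    · intro h; rw [h]; ring
    · intro h; linarith
  rw [hset, measure_preimage_add]
  apply Measure.addHaar_submodule
  intro htop
  have : x₀ ∈ LinearMap.ker g := htop ▸ Submodule.mem_top
  exact hx₀ (LinearMap.mem_ker.1 this)

lemma collinear_union {A B : Set (ℝ × ℝ)} (hA : Collinear ℝ A) (hB : Collinear ℝ B)
    {p q : ℝ × ℝ} (hpA : p ∈ A) (hpB : p ∈ B) (hqA : q ∈ A) (hqB : q ∈ B) (hpq : p ≠ q) :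
    Collinear ℝ (A ∪ B) := by
  rw [collinear_iff_of_mem hpA] at hA
  rw [collinear_iff_of_mem hpB] at hB
  obtain ⟨vA, hvA⟩ := hA
  obtain ⟨vB, hvB⟩ := hB
  obtain ⟨rA, hrA⟩ := hvA q hqA
  obtain ⟨rB, hrB⟩ := hvB q hqB
  have hrA0 : rA ≠ 0 := by rintro rfl; simp at hrA; exact hpq hrA.symm
  have hrB0 : rB ≠ 0 := by rintro rfl; simp at hrB; exact hpq hrB.symm
  rw [collinear_iff_of_mem (Set.mem_union_left _ hpA)]
  refine ⟨q -ᵥ p, ?_⟩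
  rintro x (hx | hx)
  · obtain ⟨r, hr⟩ := hvA x hx
    refine ⟨r / rA, ?_⟩
    simp only [vadd_eq_add, vsub_eq_sub] at hr hrA ⊢
    rw [hr, hrA, add_sub_cancel_right, smul_smul, div_mul_cancel₀ _ hrA0]
  · obtain ⟨r, hr⟩ := hvB x hx
    refine ⟨r / rB, ?_⟩
    simp only [vadd_eq_add, vsub_eq_sub] at hr hrB ⊢
    rw [hr, hrB, add_sub_cancel_right, smul_smul, div_mul_cancel₀ _ hrB0]

lemma exists_lexmax (S : Finset (ℤ × ℤ)) (h : S.Nonempty) :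
    ∃ v ∈ S, ∀ s ∈ S, s ≠ v → (s.1 < v.1 ∨ (s.1 = v.1 ∧ s.2 < v.2)) := by
  obtain ⟨v', hv', hmax1⟩ := S.exists_max_image (fun s => s.1) h
  set T := S.filter (fun s => s.1 = v'.1) with hT
  have hTne : T.Nonempty := ⟨v', by simp [hT, hv']⟩
  obtain ⟨v, hvT, hmax2⟩ := T.exists_max_image (fun s => s.2) hTne
  have hvS : v ∈ S := (Finset.mem_filter.1 hvT).1
  have hv1 : v.1 = v'.1 := (Finset.mem_filter.1 hvT).2
  refine ⟨v, hvS, ?_⟩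
  intro s hs hne
  rcases lt_or_eq_of_le (hmax1 s hs) with h1 | h1
  · left; omega
  · right
    have hsT : s ∈ T := Finset.mem_filter.2 ⟨hs, h1⟩
    have h2 := hmax2 s hsT
    refine ⟨by omega, ?_⟩
    rcases lt_or_eq_of_le h2 with h3 | h3
    · exact h3
    · exfalso; apply hne; ext <;> omega

lemma exists_lexmin (S : Finset (ℤ × ℤ)) (h : S.Nonempty) :
    ∃ v ∈ S, ∀ s ∈ S, s ≠ v → (v.1 < s.1 ∨ (v.1 = s.1 ∧ v.2 < s.2)) := by
  obtain ⟨v', hv', hmin1⟩ := S.exists_min_image (fun s => s.1) h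
  set T := S.filter (fun s => s.1 = v'.1) with hT
  have hTne : T.Nonempty := ⟨v', by simp [hT, hv']⟩
  obtain ⟨v, hvT, hmin2⟩ := T.exists_min_image (fun s => s.2) hTne
  have hvS : v ∈ S := (Finset.mem_filter.1 hvT).1
  have hv1 : v.1 = v'.1 := (Finset.mem_filter.1 hvT).2
  refine ⟨v, hvS, ?_⟩
  intro s hs hne
  rcases lt_or_eq_of_le (hmin1 s hs) with h1 | h1
  · left; omega
  · right
    have hsT : s ∈ T := Finset.mem_filter.2 ⟨hs, h1.symm⟩
    have h2 := hmin2 s hsT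
    refine ⟨by omega, ?_⟩
    rcases lt_or_eq_of_le h2 with h3 | h3
    · exact h3
    · exfalso; apply hne; ext <;> omega

lemma arith_core (s₁ s₂ w₁ w₂ M : ℤ) (hM : |s₂ - w₂| ≤ M)
    (h : w₁ < s₁ ∨ (w₁ = s₁ ∧ w₂ < s₂)) :
    (w₁ : ℝ) + (1 / ((M : ℝ) + 1)) * w₂ < (s₁ : ℝ) + (1 / ((M : ℝ) + 1)) * s₂ := by
  have hM0 : 0 ≤ M := le_trans (abs_nonneg _) hM
  have hMr : (0 : ℝ) ≤ (M : ℝ) := by exact_mod_cast hM0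
  have hden : (0 : ℝ) < (M : ℝ) + 1 := by linarith
  have hε : (0 : ℝ) < 1 / ((M : ℝ) + 1) := by positivity
  have habs : |(s₂ : ℝ) - (w₂ : ℝ)| ≤ (M : ℝ) := by
    rw [show (s₂ : ℝ) - (w₂ : ℝ) = ((s₂ - w₂ : ℤ) : ℝ) by push_cast; ring, ← Int.cast_abs]
    exact_mod_cast hM
  rcases h with h | ⟨h1, h2⟩
  · have h1 : (w₁ : ℝ) + 1 ≤ (s₁ : ℝ) := by exact_mod_cast Int.add_one_le_iff.2 h
    have h2 : -(M : ℝ) ≤ (s₂ : ℝ) - (w₂ : ℝ) := neg_le_of_abs_le habs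
    have h3 : (1 / ((M : ℝ) + 1)) * ((s₂ : ℝ) - (w₂ : ℝ)) ≥ (1 / ((M : ℝ) + 1)) * (-(M : ℝ)) :=
      mul_le_mul_of_nonneg_left h2 (le_of_lt hε)
    have h4 : (1 / ((M : ℝ) + 1)) * (-(M : ℝ)) > -1 := by
      rw [gt_iff_lt, show (-1 : ℝ) = (1 / ((M : ℝ) + 1)) * (-((M:ℝ)+1)) by field_simp]
      apply mul_lt_mul_of_pos_left _ hε
      linarith
    nlinarith
  · have h1' : (w₁ : ℝ) = (s₁ : ℝ) := by exact_mod_cast h1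
    have h2' : (w₂ : ℝ) + 1 ≤ (s₂ : ℝ) := by exact_mod_cast Int.add_one_le_iff.2 h2
    nlinarith

lemma sep_of_lexdom (S : Finset (ℤ × ℤ)) (v : ℤ × ℤ)
    (hd : ∀ s ∈ S, s ≠ v → (s.1 < v.1 ∨ (s.1 = v.1 ∧ s.2 < v.2))) :
    ∃ φ : (ℝ × ℝ) →ₗ[ℝ] ℝ, ∀ s ∈ S, s ≠ v → φ (latticeEmbed s) < φ (latticeEmbed v) := by
  rcases S.eq_empty_or_nonempty with rfl | hne
  · exact ⟨0, by simp⟩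
  obtain ⟨m, hm, hmb⟩ := S.exists_max_image (fun s => |s.2 - v.2|) hne
  obtain ⟨M, hMb⟩ : ∃ M : ℤ, ∀ s ∈ S, |s.2 - v.2| ≤ M := ⟨|m.2 - v.2|, fun s hs => hmb s hs⟩
  refine ⟨LinearMap.fst ℝ ℝ ℝ + (1 / ((M : ℝ) + 1)) • LinearMap.snd ℝ ℝ ℝ, ?_⟩
  intro s hs hne'
  simp only [LinearMap.add_apply, LinearMap.fst_apply, LinearMap.smul_apply, LinearMap.snd_apply,
    smul_eq_mul, latticeEmbed]
  exact arith_core v.1 v.2 s.1 s.2 M (by rw [abs_sub_comm]; exact hMb s hs) (hd s hs hne')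

lemma sep_of_lexdom' (S : Finset (ℤ × ℤ)) (v : ℤ × ℤ)
    (hd : ∀ s ∈ S, s ≠ v → (v.1 < s.1 ∨ (v.1 = s.1 ∧ v.2 < s.2))) :
    ∃ φ : (ℝ × ℝ) →ₗ[ℝ] ℝ, ∀ s ∈ S, s ≠ v → φ (latticeEmbed s) < φ (latticeEmbed v) := by
  rcases S.eq_empty_or_nonempty with rfl | hne
  · exact ⟨0, by simp⟩
  obtain ⟨m, hm, hmb⟩ := S.exists_max_image (fun s => |s.2 - v.2|) hne
  obtain ⟨M, hMb⟩ : ∃ M : ℤ, ∀ s ∈ S, |s.2 - v.2| ≤ M := ⟨|m.2 - v.2|, fun s hs => hmb s hs⟩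
  refine ⟨-(LinearMap.fst ℝ ℝ ℝ + (1 / ((M : ℝ) + 1)) • LinearMap.snd ℝ ℝ ℝ), ?_⟩
  intro s hs hne'
  simp only [LinearMap.neg_apply, LinearMap.add_apply, LinearMap.fst_apply, LinearMap.smul_apply,
    LinearMap.snd_apply, smul_eq_mul, latticeEmbed, neg_lt_neg_iff]
  exact arith_core s.1 s.2 v.1 v.2 M (hMb s hs) (hd s hs hne')

lemma exists_edge (S' : Finset (ℤ × ℤ)) (hne : S'.Nonempty) (v : ℤ × ℤ)
    (φ : (ℝ × ℝ) →ₗ[ℝ] ℝ) (hsep : ∀ s ∈ S', φ (latticeEmbed s) < φ (latticeEmbed v))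
    (hncol : ¬ Collinear ℝ (insert (latticeEmbed v) (↑(S'.image latticeEmbed) : Set (ℝ × ℝ)))) :
    ∃ a ∈ S', ∃ b ∈ S', a ≠ b ∧ ∃ g : (ℝ × ℝ) →ₗ[ℝ] ℝ,
      g (latticeEmbed a) = g (latticeEmbed b) ∧
      (∀ s ∈ S', g (latticeEmbed s) ≤ g (latticeEmbed a)) ∧
      g (latticeEmbed a) < g (latticeEmbed v) := by
  obtain ⟨a, haS, hamax⟩ := S'.exists_max_image (fun s => φ (latticeEmbed s)) hne
  set A := latticeEmbed a with hA
  set V := latticeEmbed v with hV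
  have hav : φ A < φ V := hsep a haS
  set u : ℝ × ℝ := V - A with hu
  have hVAu : V = A + u := by rw [hu]; abel
  have hune : ¬(u.2 = 0 ∧ -u.1 = 0) := by
    rintro ⟨h2, h1⟩
    have h1' : u.1 = 0 := neg_eq_zero.1 h1
    have : u = 0 := by
      rw [Prod.ext_iff]
      exact ⟨by rw [h1']; rfl, by rw [h2]; rfl⟩
    rw [hVAu, this, add_zero] at hav
    exact lt_irrefl _ hav
  set ψ0 : (ℝ × ℝ) →ₗ[ℝ] ℝ := u.2 • LinearMap.fst ℝ ℝ ℝ - u.1 • LinearMap.snd ℝ ℝ ℝ with hψ0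
  have hψ0app : ∀ x : ℝ × ℝ, ψ0 x = u.2 * x.1 - u.1 * x.2 := by
    intro x
    simp [hψ0, LinearMap.sub_apply, LinearMap.smul_apply, LinearMap.fst_apply,
      LinearMap.snd_apply, smul_eq_mul]
  have hψ0u : ψ0 u = 0 := by rw [hψ0app]; ring
  -- some point has a different ψ0-value
  have hs0 : ∃ s₀ ∈ S', ψ0 (latticeEmbed s₀) ≠ ψ0 A := by
    by_contra hcon
    push_neg at hcon
    apply hncol
    refine (collinear_level u.2 (-u.1) (ψ0 A) hune).subset ?_
    rintro x (rfl | hx)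
    · show u.2 * V.1 + -u.1 * V.2 = ψ0 A
      have : ψ0 V = ψ0 A := by rw [hVAu, map_add, hψ0u, add_zero]
      rw [← this, hψ0app]; ring
    · obtain ⟨s, hs, rfl⟩ := by
        simpa only [Finset.coe_image, Set.mem_image, Finset.mem_coe] using hx
      show u.2 * (latticeEmbed s).1 + -u.1 * (latticeEmbed s).2 = ψ0 A
      rw [← hcon s hs, hψ0app]; ring
  -- choose the sign of ψ so that some point is strictly above A's level
  obtain ⟨ψ, hψu, s₀, hs₀S, hs₀ψ⟩ : ∃ ψ : (ℝ × ℝ) →ₗ[ℝ] ℝ, ψ u = 0 ∧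
      ∃ s₀ ∈ S', ψ A < ψ (latticeEmbed s₀) := by
    obtain ⟨s₀, hs₀S, hs₀⟩ := hs0
    rcases lt_or_gt_of_ne hs₀ with h | h
    · exact ⟨-ψ0, by simp [hψ0u], s₀, hs₀S, by simpa using h⟩
    · exact ⟨ψ0, hψ0u, s₀, hs₀S, h⟩
  have hψV : ψ V = ψ A := by rw [hVAu, map_add, hψu, add_zero]
  set P := S'.filter (fun s => ψ A < ψ (latticeEmbed s)) with hP
  have hPne : P.Nonempty := ⟨s₀, Finset.mem_filter.2 ⟨hs₀S, hs₀ψ⟩⟩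
  obtain ⟨b, hbP, hbmin⟩ := P.exists_min_image
    (fun s => (φ A - φ (latticeEmbed s)) / (ψ (latticeEmbed s) - ψ A)) hPne
  have hbS : b ∈ S' := (Finset.mem_filter.1 hbP).1
  have hbψ : ψ A < ψ (latticeEmbed b) := (Finset.mem_filter.1 hbP).2
  set B := latticeEmbed b with hB
  set t := (φ A - φ B) / (ψ B - ψ A) with ht
  have hdenpos : 0 < ψ B - ψ A := sub_pos.2 hbψ
  have htnn : 0 ≤ t := div_nonneg (sub_nonneg.2 (hamax b hbS)) (le_of_lt hdenpos)
  refine ⟨a, haS, b, hbS, ?_, φ + t • ψ, ?_, ?_, ?_⟩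
  · rintro rfl
    exact lt_irrefl _ hbψ
  · have hcancel : t * (ψ B - ψ A) = φ A - φ B := div_mul_cancel₀ _ (ne_of_gt hdenpos)
    simp only [LinearMap.add_apply, LinearMap.smul_apply, smul_eq_mul]
    linarith [hcancel]
  · intro s hs
    simp only [LinearMap.add_apply, LinearMap.smul_apply, smul_eq_mul]
    by_cases hw : ψ A < ψ (latticeEmbed s)
    · have hsP : s ∈ P := Finset.mem_filter.2 ⟨hs, hw⟩
      have hmin := hbmin s hsP
      have hwpos : 0 < ψ (latticeEmbed s) - ψ A := sub_pos.2 hw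
      have : t * (ψ (latticeEmbed s) - ψ A) ≤ φ A - φ (latticeEmbed s) :=
        (le_div_iff₀ hwpos).1 hmin
      linarith
    · push_neg at hw
      have h1 : 0 ≤ t * (ψ A - ψ (latticeEmbed s)) :=
        mul_nonneg htnn (sub_nonneg.2 hw)
      have h2 : φ (latticeEmbed s) ≤ φ A := hamax s hs
      linarith
  · simp only [LinearMap.add_apply, LinearMap.smul_apply, smul_eq_mul]
    rw [hψV] at *
    have : φ A < φ V := hav
    linarith [hψV]

lemma tri_ncol {A B V : ℝ × ℝ} (g : (ℝ × ℝ) →ₗ[ℝ] ℝ) (hAB : A ≠ B) (hab : g A = g B)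
    (hv : g A < g V) : ¬ Collinear ℝ ({V, A, B} : Set (ℝ × ℝ)) := by
  intro h
  rw [collinear_iff_of_mem (show A ∈ ({V, A, B} : Set (ℝ × ℝ)) by simp)] at h
  obtain ⟨dir, hdir⟩ := h
  obtain ⟨rV, hV⟩ := hdir V (by simp)
  obtain ⟨rB, hB⟩ := hdir B (by simp)
  simp only [vadd_eq_add] at hV hB
  have hgV : g V = rV * g dir + g A := by rw [hV, map_add, g.map_smul, smul_eq_mul]
  have hgB : g B = rB * g dir + g A := by rw [hB, map_add, g.map_smul, smul_eq_mul]
  have hdir0 : g dir ≠ 0 := by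
    intro h0; rw [h0] at hgV; rw [hgV] at hv; linarith
  have hrB : rB = 0 := by
    have : rB * g dir = 0 := by rw [hab] at hgB; linarith
    rcases mul_eq_zero.1 this with h | h
    · exact h
    · exact absurd h hdir0
  apply hAB
  rw [hB, hrB, zero_smul, zero_add]

lemma card_ge_three (S : Finset (ℤ × ℤ))
    (hncol : ¬ Collinear ℝ (↑(S.image latticeEmbed) : Set (ℝ × ℝ))) : 3 ≤ S.card := by
  by_contra hlt
  push_neg at hlt
  apply hncol
  interval_cases h : S.card
  · rw [Finset.card_eq_zero.1 h]
    simp [collinear_empty]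
  · obtain ⟨x, rfl⟩ := Finset.card_eq_one.1 h
    simp [collinear_singleton]
  · obtain ⟨x, y, hxy, rfl⟩ := Finset.card_eq_two.1 h
    have : (↑(({x, y} : Finset (ℤ × ℤ)).image latticeEmbed) : Set (ℝ × ℝ))
        = {latticeEmbed x, latticeEmbed y} := by simp
    rw [this]
    exact collinear_pair ℝ _ _

lemma main_bound : ∀ (k : ℕ) (S : Finset (ℤ × ℤ)), S.card ≤ k →
    ¬ Collinear ℝ (↑(S.image latticeEmbed) : Set (ℝ × ℝ)) →
    (S.card : ℝ) / 2 - 1 ≤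
      (volume (convexHull ℝ (↑(S.image latticeEmbed) : Set (ℝ × ℝ)))).toReal := by
  intro k
  induction k with
  | zero =>
    intro S hcard hncol
    have := card_ge_three S hncol
    omega
  | succ k IH =>
    intro S hcard hncol
    have h3 : 3 ≤ S.card := card_ge_three S hncol
    have hKfin : volume (convexHull ℝ (↑(S.image latticeEmbed) : Set (ℝ × ℝ))) ≠ ⊤ :=
      ((Finset.finite_toSet _).isCompact_convexHull ℝ).measure_lt_top.ne
    by_cases hc3 : S.card = 3
    · obtain ⟨x, y, z, hxy, hxz, hyz, rfl⟩ := Finset.card_eq_three.1 hc3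
      have himg : (↑(({x, y, z} : Finset (ℤ × ℤ)).image latticeEmbed) : Set (ℝ × ℝ))
          = {latticeEmbed x, latticeEmbed y, latticeEmbed z} := by simp
      rw [himg] at hncol hKfin ⊢
      have htri := latticeTri_half x y z hncol
      have h12 := ENNReal.toReal_mono hKfin htri
      have hhalf : ((1 : ENNReal) / 2).toReal = 1 / 2 := by norm_num
      rw [hhalf] at h12
      rw [hc3]
      norm_num
      linarith
    · -- inductive step
      have h4 : 4 ≤ S.card := by omega
      have hSne : S.Nonempty := Finset.card_pos.1 (by omega)
      obtain ⟨v₁, hv₁S, hdom₁⟩ := exists_lexmax S hSne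
      obtain ⟨v₂, hv₂S, hdom₂⟩ := exists_lexmin S hSne
      have h12 : v₁ ≠ v₂ := by
        intro h
        subst h
        obtain ⟨p, hp, q, hq, hpq⟩ := Finset.one_lt_card.1 (by omega : 1 < S.card)
        have hne : p ≠ v₁ ∨ q ≠ v₁ := by
          rcases eq_or_ne p v₁ with rfl | hh
          · right; exact fun hq' => hpq (hq' ▸ rfl)
          · left; exact hh
        rcases hne with hh | hh
        · rcases hdom₁ p hp hh with h1 | ⟨h1, h1'⟩ <;>
            rcases hdom₂ p hp hh with h2 | ⟨h2, h2'⟩ <;> omega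
        · rcases hdom₁ q hq hh with h1 | ⟨h1, h1'⟩ <;>
            rcases hdom₂ q hq hh with h2 | ⟨h2, h2'⟩ <;> omega
      have hbad : ¬ Collinear ℝ (↑((S.erase v₁).image latticeEmbed) : Set (ℝ × ℝ)) ∨
          ¬ Collinear ℝ (↑((S.erase v₂).image latticeEmbed) : Set (ℝ × ℝ)) := by
        by_contra hcon
        rw [not_or, not_not, not_not] at hcon
        obtain ⟨hc1, hc2⟩ := hcon
        apply hncol
        have hcard2 : 1 < ((S.erase v₁).erase v₂).card := by
          rw [Finset.card_erase_of_mem, Finset.card_erase_of_mem hv₁S]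
          · omega
          · exact Finset.mem_erase.2 ⟨(Ne.symm h12), hv₂S⟩
        obtain ⟨p, hp, q, hq, hpq⟩ := Finset.one_lt_card.1 hcard2
        have hp1 : p ∈ S.erase v₁ := Finset.mem_of_mem_erase hp
        have hq1 : q ∈ S.erase v₁ := Finset.mem_of_mem_erase hq
        have hp2 : p ∈ S.erase v₂ := Finset.mem_erase.2
          ⟨(Finset.mem_erase.1 hp).1, Finset.mem_of_mem_erase hp1⟩
        have hq2 : q ∈ S.erase v₂ := Finset.mem_erase.2
          ⟨(Finset.mem_erase.1 hq).1, Finset.mem_of_mem_erase hq1⟩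
        have hSU : S = (S.erase v₁) ∪ (S.erase v₂) := by
          ext s
          simp only [Finset.mem_union, Finset.mem_erase]
          constructor
          · intro hs
            rcases eq_or_ne s v₁ with rfl | hh
            · exact Or.inr ⟨h12, hs⟩
            · exact Or.inl ⟨hh, hs⟩
          · rintro (⟨_, hs⟩ | ⟨_, hs⟩) <;> exact hs
        rw [hSU, Finset.image_union, Finset.coe_union]
        exact collinear_union hc1 hc2
          (Finset.mem_coe.2 (Finset.mem_image_of_mem _ hp1))
          (Finset.mem_coe.2 (Finset.mem_image_of_mem _ hp2))
          (Finset.mem_coe.2 (Finset.mem_image_of_mem _ hq1))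
          (Finset.mem_coe.2 (Finset.mem_image_of_mem _ hq2))
          (fun hh => hpq (latticeEmbed_inj hh))
      obtain ⟨v, hvS, hncol', φ, hφ⟩ : ∃ v, v ∈ S ∧
          ¬ Collinear ℝ (↑((S.erase v).image latticeEmbed) : Set (ℝ × ℝ)) ∧
          ∃ φ : (ℝ × ℝ) →ₗ[ℝ] ℝ, ∀ s ∈ S.erase v,
            φ (latticeEmbed s) < φ (latticeEmbed v) := by
        rcases hbad with hb | hb
        · obtain ⟨φ, hφ⟩ := sep_of_lexdom (S.erase v₁) v₁
            (fun s hs hne => hdom₁ s (Finset.mem_of_mem_erase hs) hne)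
          exact ⟨v₁, hv₁S, hb, φ, fun s hs => hφ s hs (Finset.ne_of_mem_erase hs)⟩
        · obtain ⟨φ, hφ⟩ := sep_of_lexdom' (S.erase v₂) v₂
            (fun s hs hne => hdom₂ s (Finset.mem_of_mem_erase hs) hne)
          exact ⟨v₂, hv₂S, hb, φ, fun s hs => hφ s hs (Finset.ne_of_mem_erase hs)⟩
      have hS'ne : (S.erase v).Nonempty := by
        rw [← Finset.card_pos, Finset.card_erase_of_mem hvS]; omega
      have hins : insert (latticeEmbed v) (↑((S.erase v).image latticeEmbed) : Set (ℝ × ℝ))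
          = (↑(S.image latticeEmbed) : Set (ℝ × ℝ)) := by
        conv_rhs => rw [← Finset.insert_erase hvS]
        rw [Finset.image_insert, Finset.coe_insert]
      obtain ⟨a, haS, b, hbS, hab, g, hgab, hgle, hgav⟩ :=
        exists_edge (S.erase v) hS'ne v φ hφ (by rw [hins]; exact hncol)
      -- measure-theoretic endgame
      set K := convexHull ℝ (↑(S.image latticeEmbed) : Set (ℝ × ℝ)) with hK
      set K' := convexHull ℝ (↑((S.erase v).image latticeEmbed) : Set (ℝ × ℝ)) with hK'
      set Δ := convexHull ℝ
        ({latticeEmbed v, latticeEmbed a, latticeEmbed b} : Set (ℝ × ℝ)) with hΔ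
      set c := g (latticeEmbed a) with hc
      have hK'K : K' ⊆ K :=
        convexHull_mono (Finset.coe_subset.2 (Finset.image_subset_image (Finset.erase_subset _ _)))
      have hΔK : Δ ⊆ K := by
        apply convexHull_mono
        rintro x (rfl | rfl | rfl)
        · exact Finset.mem_coe.2 (Finset.mem_image_of_mem _ hvS)
        · exact Finset.mem_coe.2 (Finset.mem_image_of_mem _ (Finset.mem_of_mem_erase haS))
        · exact Finset.mem_coe.2 (Finset.mem_image_of_mem _ (Finset.mem_of_mem_erase hbS))
      have hK'le : K' ⊆ {x : ℝ × ℝ | g x ≤ c} := by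
        apply convexHull_min _ (convex_halfSpace_le g.isLinear c)
        rintro x hx
        obtain ⟨s, hs, rfl⟩ := by
          simpa only [Finset.coe_image, Set.mem_image, Finset.mem_coe] using hx
        exact hgle s hs
      have hΔge : Δ ⊆ {x : ℝ × ℝ | c ≤ g x} := by
        apply convexHull_min _ (convex_halfSpace_ge g.isLinear c)
        rintro x (rfl | rfl | rfl)
        · exact le_of_lt hgav
        · exact le_of_eq hc
        · exact le_of_eq hgab
      have hK'm : MeasurableSet K' :=
        ((Finset.finite_toSet _).isCompact_convexHull ℝ).isClosed.measurableSet
      have hΔm : MeasurableSet Δ :=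
        (((Set.finite_singleton _).insert _).insert
          _).isCompact_convexHull ℝ |>.isClosed.measurableSet
      have hgcont : Continuous g := g.continuous_of_finiteDimensional
      have hlev : volume {x : ℝ × ℝ | g x = c} = 0 := by
        apply level_null g (latticeEmbed v - latticeEmbed a)
        rw [map_sub, sub_ne_zero, ← hc]
        exact ne_of_gt hgav
      set D := Δ \ {x : ℝ × ℝ | g x ≤ c} with hD
      have hDm : MeasurableSet D :=
        hΔm.diff ((isClosed_le hgcont continuous_const).measurableSet)
      have hDdisj : Disjoint K' D :=
        Set.disjoint_left.2 (fun x hx hxD => hxD.2 (hK'le hx))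
      have hKD : K' ∪ D ⊆ K := Set.union_subset hK'K (fun x hx => hΔK hx.1)
      have hμD : volume D = volume Δ := by
        apply measure_diff_null'
        apply measure_mono_null _ hlev
        rintro x ⟨hx1, hx2⟩
        exact le_antisymm hx2 (hΔge hx1)
      have hsum : volume K' + volume Δ ≤ volume K := by
        rw [← hμD, ← measure_union hDdisj hDm]
        exact measure_mono hKD
      have hS'card : (S.erase v).card = S.card - 1 := Finset.card_erase_of_mem hvS
      have hIH := IH (S.erase v) (by omega) hncol'
      have htri : (1/2 : ENNReal) ≤ volume Δ := by
        apply latticeTri_half v a b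
        apply tri_ncol g _ hgab hgav
        exact fun hh => hab (latticeEmbed_inj hh)
      have hK'fin : volume K' ≠ ⊤ :=
        ((measure_mono hK'K).trans_lt (lt_top_iff_ne_top.2 hKfin)).ne
      have hΔfin : volume Δ ≠ ⊤ :=
        ((measure_mono hΔK).trans_lt (lt_top_iff_ne_top.2 hKfin)).ne
      have treal : (volume K').toReal + (volume Δ).toReal ≤ (volume K).toReal := by
        rw [← ENNReal.toReal_add hK'fin hΔfin]
        exact ENNReal.toReal_mono hKfin hsum
      have htri' : (1/2 : ℝ) ≤ (volume Δ).toReal := by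
        have h12 := ENNReal.toReal_mono hΔfin htri
        have hhalf : ((1 : ENNReal) / 2).toReal = 1 / 2 := by norm_num
        rw [hhalf] at h12
        exact h12
      have hcast : ((S.erase v).card : ℝ) = (S.card : ℝ) - 1 := by
        rw [hS'card, Nat.cast_sub (by omega : 1 ≤ S.card)]
        norm_num
      rw [hcast] at hIH
      linarith

/-- **Convex-hull area lower bound:** the convex hull of `n` non-collinear lattice
points has area at least `n/2 - 1`. -/
theorem convexHull_area_lower_bound (S : Finset (ℤ × ℤ)) (n : ℕ) (hn : S.card = n)
    (hncol : ¬ Collinear ℝ (↑(S.image latticeEmbed) : Set (ℝ × ℝ)))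
    (K : Set (ℝ × ℝ)) (hK : K = convexHull ℝ (↑(S.image latticeEmbed) : Set (ℝ × ℝ))) :
    (n : ℝ) / 2 - 1 ≤ (volume K).toReal := by
  subst hn
  subst hK
  exact main_bound S.card S le_rfl hncol
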